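/- Let E be a real inner product space and let σ(P,Q) = ½‖P−Q‖² be its world function. Define A(P₀,P₁,R) = √σ(P₀,R) + √σ(P₁,R) − √σ(P₁,P₀), A(P₀,R,P₁) = √σ(P₁,P₀) + √σ(P₁,R) − √σ(P₀,R), and B(P₀,P₁,R) = σ(P₁,R) − σ(P₀,R) − σ(P₁,P₀) − 2·√(σ(P₀,P₁)·σ(P₀,R)). Then for all points P₀, P₁, R in E, the Cauchy–Schwarz deficiency factorizes as ⟨P₁−P₀, R−P₀⟩² − ‖P₁−P₀‖²·‖R−P₀‖² = A(P₀,P₁,R)·A(P₀,R,P₁)·B(P₀,P₁,R). -/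

import Mathlib

open RealInnerProductSpace

/-- Factorization of the Cauchy–Schwarz deficiency: with `σ(P,Q) = ½‖P−Q‖²`,
`A(P₀,P₁,R) = √σ(P₀,R) + √σ(P₁,R) − √σ(P₁,P₀)`,
`A(P₀,R,P₁) = √σ(P₁,P₀) + √σ(P₁,R) − √σ(P₀,R)` and
`B(P₀,P₁,R) = σ(P₁,R) − σ(P₀,R) − σ(P₁,P₀) − 2√(σ(P₀,P₁)σ(P₀,R))`, one has
`⟨P₁−P₀,R−P₀⟩² − ‖P₁−P₀‖²‖R−P₀‖² = A(P₀,P₁,R)·A(P₀,R,P₁)·B(P₀,P₁,R)`. -/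
theorem cauchy_schwarz_deficiency_factorization
    {E : Type*} [NormedAddCommGroup E] [InnerProductSpace ℝ E]
    (σ : E → E → ℝ) (hσ : ∀ P Q : E, σ P Q = ‖P - Q‖ ^ 2 / 2)
    (A : E → E → E → ℝ)
    (hA : ∀ P₀ P₁ R : E,
      A P₀ P₁ R = Real.sqrt (σ P₀ R) + Real.sqrt (σ P₁ R) - Real.sqrt (σ P₁ P₀))
    (B : E → E → E → ℝ)
    (hB : ∀ P₀ P₁ R : E,
      B P₀ P₁ R = σ P₁ R - σ P₀ R - σ P₁ P₀ - 2 * Real.sqrt (σ P₀ P₁ * σ P₀ R)) :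
    ∀ P₀ P₁ R : E,
      ⟪P₁ - P₀, R - P₀⟫ ^ 2 - ‖P₁ - P₀‖ ^ 2 * ‖R - P₀‖ ^ 2 =
        A P₀ P₁ R * A P₀ R P₁ * B P₀ P₁ R := by
  intro P₀ P₁ R
  set a := ‖P₁ - P₀‖ with ha
  set b := ‖R - P₀‖ with hb
  set c := ‖P₁ - R‖ with hc
  set t : ℝ := ⟪P₁ - P₀, R - P₀⟫ with ht
  have ha0 : 0 ≤ a := norm_nonneg _
  have hb0 : 0 ≤ b := norm_nonneg _
  have hc0 : 0 ≤ c := norm_nonneg _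
  have hrev1 : ‖P₀ - P₁‖ = a := by rw [ha, norm_sub_rev]
  have hrev2 : ‖P₀ - R‖ = b := by rw [hb, norm_sub_rev]
  have hrev3 : ‖R - P₁‖ = c := by rw [hc, norm_sub_rev]
  have hsub : P₁ - R = (P₁ - P₀) - (R - P₀) := by abel
  have hcc : c ^ 2 = a ^ 2 + b ^ 2 - 2 * t := by
    rw [hc, hsub, @norm_sub_sq_real]; ring
  have hs0 : (0:ℝ) < Real.sqrt 2 := Real.sqrt_pos.mpr (by norm_num)
  have hs2 : Real.sqrt 2 ^ 2 = 2 := Real.sq_sqrt (by norm_num)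
  have key : ∀ x : ℝ, 0 ≤ x → Real.sqrt (x ^ 2 / 2) = x / Real.sqrt 2 := by
    intro x hx
    rw [Real.sqrt_div (sq_nonneg x), Real.sqrt_sq hx]
  have hab : Real.sqrt (a ^ 2 / 2 * (b ^ 2 / 2)) = a * b / 2 := by
    have : a ^ 2 / 2 * (b ^ 2 / 2) = (a * b / 2) ^ 2 := by ring
    rw [this, Real.sqrt_sq (by positivity)]
  rw [hA P₀ P₁ R, hA P₀ R P₁, hB P₀ P₁ R]
  simp only [hσ, hrev1, hrev2, hrev3]
  rw [key a ha0, key b hb0, key c hc0, hab]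
  field_simp
  rw [← hc, ← ha, hs2]
  nlinarith [hcc, hs2, sq_nonneg (a*b - t), congrArg (· * (c ^ 2 + (a ^ 2 + b ^ 2 - 2 * t) - (a - b) ^ 2 - (a + b) ^ 2)) hcc]
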